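/- For every ℓ ∈ ℕ, every language in the dot-depth class B_ℓ over Σ is ADT_{2ℓ+2}-definable. -/

import Mathlib

namespace ADTpaper

/-- Propositional formulas over a set `P` of propositional variables. -/
inductive PropForm (P : Type) : Type where
  | var : P → PropForm P
  | tru : PropForm P
  | fls : PropForm P
  | neg : PropForm P → PropForm P
  | conj : PropForm P → PropForm P → PropForm P
  | disj : PropForm P → PropForm P → PropForm P

/-- A valuation is a subset of `P` (an element of the alphabet `Σ = 2^P`). -/
abbrev Val (P : Type) : Type := Set P

/-- A trace is a finite word over the alphabet `Σ = 2^P`. -/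
abbrev Trace (P : Type) : Type := List (Val P)

/-- Satisfaction of a propositional formula by a valuation. -/
def PropForm.eval {P : Type} (v : Val P) : PropForm P → Prop
  | .var p => p ∈ v
  | .tru => True
  | .fls => False
  | .neg φ => ¬ PropForm.eval v φ
  | .conj φ ψ => PropForm.eval v φ ∧ PropForm.eval v ψ
  | .disj φ ψ => PropForm.eval v φ ∨ PropForm.eval v ψ

/-- Size of a propositional formula. -/
def PropForm.size {P : Type} : PropForm P → ℕ
  | .var _ => 1
  | .tru => 1
  | .fls => 1
  | .neg φ => PropForm.size φ + 1
  | .conj φ ψ => PropForm.size φ + PropForm.size ψ + 1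
  | .disj φ ψ => PropForm.size φ + PropForm.size ψ + 1

/-- Attack-defense trees over `P` (operators taken binary, w.l.o.g. by associativity). -/
inductive ADT (P : Type) : Type where
  | eps  : ADT P
  | leaf : PropForm P → ADT P
  | orA  : ADT P → ADT P → ADT P
  | sand : ADT P → ADT P → ADT P
  | andA : ADT P → ADT P → ADT P
  | cm   : ADT P → ADT P → ADT P

/-- Trace semantics of an adt: a language over the alphabet `Σ = 2^P`. -/
def sem {P : Type} : ADT P → Language (Val P)
  | .eps => 1
  | .leaf γ => {w | ∃ w' v, w = w' ++ [v] ∧ PropForm.eval v γ}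
  | .orA t₁ t₂ => sem t₁ ⊔ sem t₂
  | .sand t₁ t₂ => sem t₁ * sem t₂
  | .andA t₁ t₂ => (sem t₁ * ⊤ ⊓ sem t₂) ⊔ (sem t₂ * ⊤ ⊓ sem t₁)
  | .cm t₁ t₂ => sem t₁ \ sem t₂

/-- Countermeasure-depth of an adt. -/
def cd {P : Type} : ADT P → ℕ
  | .eps => 0
  | .leaf _ => 0
  | .orA t₁ t₂ => max (cd t₁) (cd t₂)
  | .sand t₁ t₂ => max (cd t₁) (cd t₂)
  | .andA t₁ t₂ => max (cd t₁) (cd t₂)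
  | .cm t₁ t₂ => max (cd t₁) (cd t₂ + 1)

/-- The size of an adt: the sum of the sizes of its leaves, the leaf `ε` having size 1. -/
def ADT.size {P : Type} : ADT P → ℕ
  | .eps => 1
  | .leaf γ => PropForm.size γ
  | .orA t₁ t₂ => ADT.size t₁ + ADT.size t₂
  | .sand t₁ t₂ => ADT.size t₁ + ADT.size t₂
  | .andA t₁ t₂ => ADT.size t₁ + ADT.size t₂
  | .cm t₁ t₂ => ADT.size t₁ + ADT.size t₂


/-- Concatenations `L₁ ⬝ … ⬝ Lₙ` (`n ≥ 1`) of languages from the class `C`. -/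
inductive ConcatOf {α : Type} (C : Language α → Prop) : Language α → Prop where
  | base {L : Language α} : C L → ConcatOf C L
  | mul {L₁ L₂ : Language α} : ConcatOf C L₁ → ConcatOf C L₂ → ConcatOf C (L₁ * L₂)

/-- Boolean combinations of languages from the class `C`. -/
inductive BoolComb {α : Type} (C : Language α → Prop) : Language α → Prop where
  | base {L : Language α} : C L → BoolComb C L
  | union {L₁ L₂ : Language α} : BoolComb C L₁ → BoolComb C L₂ → BoolComb C (L₁ ⊔ L₂)
  | inter {L₁ L₂ : Language α} : BoolComb C L₁ → BoolComb C L₂ → BoolComb C (L₁ ⊓ L₂)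
  | compl {L : Language α} : BoolComb C L → BoolComb C Lᶜ

/-- The dot-depth hierarchy: `B₀` is the class of finite or cofinite languages, and
`B_{ℓ+1}` is the class of Boolean combinations of concatenations of languages of `B_ℓ`. -/
def DotDepth {α : Type} : ℕ → Language α → Prop
  | 0, L => Set.Finite (L : Set (List α)) ∨ Set.Finite ((Lᶜ : Language α) : Set (List α))
  | ℓ + 1, L => BoolComb (ConcatOf (DotDepth ℓ)) L


/-! ### Auxiliary development -/

open scoped Classical

section Aux

variable {P : Type}

/-- The full language `⊤`. -/
def allT : ADT P := .orA .eps (.leaf .tru)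

lemma mem_sem_leaf_tru (w : Trace P) :
    w ∈ sem (.leaf (.tru : PropForm P)) ↔ w ≠ [] := by
  constructor
  · rintro ⟨w', v, rfl, -⟩; simp
  · intro hw
    rcases List.eq_nil_or_concat w with rfl | ⟨w', v, rfl⟩
    · exact absurd rfl hw
    · exact ⟨w', v, by simp, trivial⟩

lemma sem_allT : sem (allT : ADT P) = ⊤ := by
  ext w
  constructor
  · intro _; trivial
  · intro _
    rcases List.eq_nil_or_concat w with rfl | ⟨w', v, rfl⟩
    · exact Or.inl rfl
    · exact Or.inr ⟨w', v, by simp, trivial⟩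

lemma cd_allT : cd (allT : ADT P) = 0 := rfl

lemma sem_leaf_fls : sem (.leaf (.fls : PropForm P)) = ⊥ := by
  ext w
  constructor
  · rintro ⟨w', v, -, h⟩
    exact h.elim
  · intro h
    exact h.elim

/-- A tree for the complement of a language. -/
def complT (t : ADT P) : ADT P := .cm allT t

lemma sem_complT (t : ADT P) : sem (complT t) = (sem t)ᶜ := by
  ext w
  show w ∈ sem allT \ sem t ↔ _
  rw [sem_allT]
  exact ⟨fun h => h.2, fun h => ⟨trivial, h⟩⟩

lemma cd_complT (t : ADT P) : cd (complT t) = cd t + 1 := by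
  simp [complT, cd, cd_allT]

/-- Big disjunction. -/
def bigOr : List (ADT P) → ADT P
  | [] => .leaf .fls
  | t :: ts => .orA t (bigOr ts)

lemma cd_bigOr {k : ℕ} {l : List (ADT P)} (h : ∀ t ∈ l, cd t ≤ k) :
    cd (bigOr l) ≤ k := by
  induction l with
  | nil => simp [bigOr, cd]
  | cons t ts ih =>
    simp only [bigOr, cd, max_le_iff]
    exact ⟨h t (by simp), ih (fun s hs => h s (by simp [hs]))⟩



/-- Characteristic formula of a valuation. -/
noncomputable def chiAux (a : Val P) : List P → PropForm P
  | [] => .tru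
  | p :: ps => .conj (if p ∈ a then .var p else .neg (.var p)) (chiAux a ps)

lemma eval_chiAux (a v : Val P) (l : List P) :
    PropForm.eval v (chiAux a l) ↔ ∀ p ∈ l, (p ∈ v ↔ p ∈ a) := by
  induction l with
  | nil => simp [chiAux, PropForm.eval]
  | cons p ps ih =>
    have hlit : PropForm.eval v (if p ∈ a then .var p else .neg (.var p)) ↔
        (p ∈ v ↔ p ∈ a) := by
      by_cases hp : p ∈ a <;> simp [hp, PropForm.eval]
    simp only [chiAux, PropForm.eval, ih, List.forall_mem_cons, hlit]

noncomputable def chi [Fintype P] (a : Val P) : PropForm P :=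
  chiAux a (Finset.univ : Finset P).toList

lemma eval_chi [Fintype P] (a v : Val P) :
    PropForm.eval v (chi a) ↔ v = a := by
  rw [chi, eval_chiAux]
  constructor
  · intro h
    ext p
    exact h p (by simp)
  · rintro rfl p -
    rfl

/-- Tree for the singleton language `{[a]}`. -/
noncomputable def letterT [Fintype P] (a : Val P) : ADT P :=
  .cm (.leaf (chi a)) (.sand (.leaf .tru) (.leaf .tru))

lemma cd_letterT [Fintype P] (a : Val P) : cd (letterT a) = 1 := rfl

lemma sem_letterT [Fintype P] (a : Val P) : sem (letterT a) = {[a]} := by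
  ext w
  show (w ∈ sem (.leaf (chi a)) ∧
      w ∉ sem (.leaf (.tru : PropForm P)) * sem (.leaf (.tru : PropForm P))) ↔ _
  constructor
  · rintro ⟨⟨w', v, rfl, hv⟩, h2⟩
    rw [eval_chi] at hv
    subst hv
    rcases List.eq_nil_or_concat w' with rfl | ⟨w'', u, rfl⟩
    · rfl
    · exfalso
      apply h2
      rw [Language.mem_mul]
      exact ⟨w'' ++ [u], (mem_sem_leaf_tru _).2 (by simp), [v],
        (mem_sem_leaf_tru _).2 (by simp), by simp⟩
  · rintro rfl
    refine ⟨⟨[], a, rfl, (eval_chi a a).2 rfl⟩, ?_⟩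
    rw [Language.mem_mul]
    rintro ⟨x, hx, y, hy, hxy⟩
    rw [mem_sem_leaf_tru] at hx hy
    have : 2 ≤ x.length + y.length := by
      have hx1 : 1 ≤ x.length := List.length_pos_iff.2 hx
      have hy1 : 1 ≤ y.length := List.length_pos_iff.2 hy
      omega
    have := congrArg List.length hxy
    simp at this
    omega

/-- Tree for the singleton language `{w}`. -/
noncomputable def wordT [Fintype P] : Trace P → ADT P
  | [] => .eps
  | a :: w => .sand (letterT a) (wordT w)

lemma cd_wordT [Fintype P] (w : Trace P) : cd (wordT w) ≤ 1 := by
  induction w with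
  | nil => simp [wordT, cd]
  | cons a w ih =>
    show max (cd (letterT a)) (cd (wordT w)) ≤ 1
    exact max_le (le_of_eq (cd_letterT a)) ih

lemma sem_wordT [Fintype P] (w : Trace P) : sem (wordT w) = {w} := by
  induction w with
  | nil =>
    ext u; simp only [wordT, sem]; exact Language.mem_one u
  | cons a w ih =>
    ext u
    show u ∈ sem (letterT a) * sem (wordT w) ↔ _
    rw [Language.mem_mul]
    constructor
    · rintro ⟨x, hx, y, hy, rfl⟩
      rw [sem_letterT] at hx
      rw [ih] at hy
      have hx' : x = [a] := hx
      have hy' : y = w := hy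
      subst hx'; subst hy'; rfl
    · rintro rfl
      exact ⟨[a], by rw [sem_letterT]; rfl, w, by rw [ih]; rfl, rfl⟩

lemma sem_bigOr_word [Fintype P] (l : List (Trace P)) :
    sem (bigOr (l.map wordT)) = {w | w ∈ l} := by
  induction l with
  | nil =>
    rw [List.map_nil]
    show sem (.leaf .fls) = _
    rw [sem_leaf_fls]
    ext w
    constructor
    · intro h; exact h.elim
    · intro h; exact absurd h (List.not_mem_nil : w ∉ [])
  | cons w ws ih =>
    rw [List.map_cons]
    show sem (wordT w) ⊔ sem (bigOr (ws.map wordT)) = _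
    rw [sem_wordT, ih]
    ext u
    show u = w ∨ u ∈ ws ↔ u ∈ w :: ws
    simp

/-- Every finite language has a tree of countermeasure-depth at most 1. -/
lemma finite_tree [Fintype P] {L : Language (Val P)}
    (hL : Set.Finite (L : Set (Trace P))) :
    ∃ t : ADT P, cd t ≤ 1 ∧ sem t = L := by
  refine ⟨bigOr (hL.toFinset.toList.map wordT), ?_, ?_⟩
  · apply cd_bigOr
    intro t ht
    rcases List.mem_map.1 ht with ⟨w, -, rfl⟩
    exact cd_wordT w
  · rw [sem_bigOr_word]
    ext w
    show w ∈ hL.toFinset.toList ↔ w ∈ L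
    exact Finset.mem_toList.trans hL.mem_toFinset

end Aux

/-! ### DNF machinery -/

section DNF

variable {α : Type}

/-- Semantics of a conjunction of literals. -/
def semConj : List (Bool × Language α) → Language α
  | [] => ⊤
  | (b, L) :: c => (if b then L else Lᶜ) ⊓ semConj c

/-- Semantics of a DNF. -/
def semDNF : List (List (Bool × Language α)) → Language α
  | [] => ⊥
  | c :: d => semConj c ⊔ semDNF d

lemma semConj_append (c₁ c₂ : List (Bool × Language α)) :
    semConj (c₁ ++ c₂) = semConj c₁ ⊓ semConj c₂ := by
  induction c₁ with
  | nil => simp [semConj]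
  | cons l c ih =>
    obtain ⟨b, L⟩ := l
    simp only [List.cons_append, semConj, List.append_eq, ih, inf_assoc]

lemma semDNF_append (d₁ d₂ : List (List (Bool × Language α))) :
    semDNF (d₁ ++ d₂) = semDNF d₁ ⊔ semDNF d₂ := by
  induction d₁ with
  | nil => simp [semDNF]
  | cons c d ih => simp only [List.cons_append, semDNF, List.append_eq, ih, sup_assoc]

/-- Conjunction of two DNFs. -/
def interDNF (d₁ d₂ : List (List (Bool × Language α))) :
    List (List (Bool × Language α)) :=
  d₁.flatMap fun c₁ => d₂.map fun c₂ => c₁ ++ c₂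

lemma semDNF_map_append (c : List (Bool × Language α))
    (d : List (List (Bool × Language α))) :
    semDNF (d.map fun c₂ => c ++ c₂) = semConj c ⊓ semDNF d := by
  induction d with
  | nil => simp [semDNF]
  | cons c₂ d ih =>
    simp only [List.map_cons, semDNF, ih, semConj_append, inf_sup_left]

lemma semDNF_interDNF (d₁ d₂ : List (List (Bool × Language α))) :
    semDNF (interDNF d₁ d₂) = semDNF d₁ ⊓ semDNF d₂ := by
  induction d₁ with
  | nil => simp [interDNF, semDNF]
  | cons c d ih =>
    simp only [interDNF, List.flatMap_cons] at *
    rw [semDNF_append, semDNF_map_append, ih]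
    simp only [semDNF, inf_sup_right]

/-- Negation of a conjunction, as a DNF. -/
def negConj (c : List (Bool × Language α)) : List (List (Bool × Language α)) :=
  c.map fun l => [(!l.1, l.2)]

lemma semDNF_negConj (c : List (Bool × Language α)) :
    semDNF (negConj c) = (semConj c)ᶜ := by
  induction c with
  | nil => simp [negConj, semDNF, semConj]
  | cons l c ih =>
    obtain ⟨b, L⟩ := l
    simp only [negConj, List.map_cons, semDNF, semConj, ih, compl_inf] at *
    congr 1
    cases b <;> simp [semConj]

/-- Negation of a DNF. -/
def negDNF : List (List (Bool × Language α)) → List (List (Bool × Language α))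
  | [] => [[]]
  | c :: d => interDNF (negConj c) (negDNF d)

lemma semDNF_negDNF (d : List (List (Bool × Language α))) :
    semDNF (negDNF d) = (semDNF d)ᶜ := by
  induction d with
  | nil => simp [negDNF, semDNF, semConj]
  | cons c d ih =>
    simp only [negDNF, semDNF_interDNF, semDNF_negConj, ih, semDNF, compl_sup]

lemma negDNF_lits {C : Language α → Prop}
    (d : List (List (Bool × Language α))) (hd : ∀ c ∈ d, ∀ l ∈ c, C l.2) :
    ∀ c ∈ negDNF d, ∀ l ∈ c, C l.2 := by
  induction d with
  | nil =>
    intro c hc l hl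
    simp only [negDNF, List.mem_singleton] at hc
    subst hc
    exact absurd hl (List.not_mem_nil : l ∉ [])
  | cons c₀ d ihd =>
    intro c hc l hl
    simp only [negDNF, interDNF, negConj] at hc
    rcases List.mem_flatMap.1 hc with ⟨c₁, hc₁, hc₂⟩
    rcases List.mem_map.1 hc₂ with ⟨c₂, hc₂', rfl⟩
    rcases List.mem_append.1 hl with hl | hl
    · rcases List.mem_map.1 hc₁ with ⟨l₀, hl₀, rfl⟩
      rcases List.mem_singleton.1 hl with rfl
      exact hd c₀ (by simp) l₀ hl₀
    · exact ihd (fun c hc l hl => hd c (by simp [hc]) l hl) c₂ hc₂' l hl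

/-- Every Boolean combination has a DNF over the base class. -/
lemma boolComb_dnf {C : Language α → Prop} {L : Language α}
    (h : BoolComb C L) :
    ∃ d : List (List (Bool × Language α)),
      (∀ c ∈ d, ∀ l ∈ c, C l.2) ∧ semDNF d = L := by
  induction h with
  | base hL => exact ⟨[[(true, _)]], by simpa [semDNF, semConj] using hL, by
      simp [semDNF, semConj]⟩
  | union _ _ ih₁ ih₂ =>
    obtain ⟨d₁, hd₁, rfl⟩ := ih₁
    obtain ⟨d₂, hd₂, rfl⟩ := ih₂
    refine ⟨d₁ ++ d₂, ?_, semDNF_append d₁ d₂⟩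
    intro c hc
    rcases List.mem_append.1 hc with hc | hc
    exacts [hd₁ c hc, hd₂ c hc]
  | inter _ _ ih₁ ih₂ =>
    obtain ⟨d₁, hd₁, rfl⟩ := ih₁
    obtain ⟨d₂, hd₂, rfl⟩ := ih₂
    refine ⟨interDNF d₁ d₂, ?_, semDNF_interDNF d₁ d₂⟩
    intro c hc l hl
    rcases List.mem_flatMap.1 hc with ⟨c₁, hc₁, hc₂⟩
    rcases List.mem_map.1 hc₂ with ⟨c₂', hc₂', rfl⟩
    rcases List.mem_append.1 hl with hl | hl
    exacts [hd₁ c₁ hc₁ l hl, hd₂ c₂' hc₂' l hl]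
  | compl _ ih =>
    obtain ⟨d, hd, rfl⟩ := ih
    exact ⟨negDNF d, negDNF_lits d hd, semDNF_negDNF d⟩

end DNF

section Trees

variable {P : Type}

/-- A tree for a conjunction of literals whose languages have trees of depth `≤ k`:
first a tree for the complement of the conjunction, of depth `≤ k + 1`. -/
lemma conj_compl_tree {k : ℕ} (c : List (Bool × Language (Val P)))
    (h : ∀ l ∈ c, ∃ t : ADT P, cd t ≤ k ∧ sem t = l.2) :
    ∃ t : ADT P, cd t ≤ k + 1 ∧ sem t = (semConj c)ᶜ := by
  induction c with
  | nil =>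
    refine ⟨.leaf .fls, by simp [cd], ?_⟩
    rw [sem_leaf_fls]
    simp [semConj]
  | cons l c ih =>
    obtain ⟨b, L⟩ := l
    obtain ⟨tL, htLcd, htLsem⟩ := h (b, L) (by simp)
    obtain ⟨s, hscd, hssem⟩ := ih (fun l hl => h l (by simp [hl]))
    refine ⟨.orA (if b then complT tL else tL) s, ?_, ?_⟩
    · simp only [cd, max_le_iff]
      refine ⟨?_, hscd⟩
      cases b
      · simpa using htLcd.trans (Nat.le_succ k)
      · simpa [cd_complT] using htLcd
    · show sem _ ⊔ sem s = _
      rw [hssem]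
      simp only [semConj, compl_inf]
      congr 1
      cases b <;> simp [sem_complT, htLsem]

lemma conj_tree {k : ℕ} (c : List (Bool × Language (Val P)))
    (h : ∀ l ∈ c, ∃ t : ADT P, cd t ≤ k ∧ sem t = l.2) :
    ∃ t : ADT P, cd t ≤ k + 2 ∧ sem t = semConj c := by
  obtain ⟨s, hscd, hssem⟩ := conj_compl_tree c h
  refine ⟨.cm allT s, ?_, ?_⟩
  · simp only [cd, cd_allT, max_le_iff]
    omega
  · show sem allT \ sem s = _
    rw [sem_allT, hssem]
    ext w
    simp [Set.mem_diff]

lemma dnf_tree {k : ℕ} (d : List (List (Bool × Language (Val P))))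
    (h : ∀ c ∈ d, ∀ l ∈ c, ∃ t : ADT P, cd t ≤ k ∧ sem t = l.2) :
    ∃ t : ADT P, cd t ≤ k + 2 ∧ sem t = semDNF d := by
  induction d with
  | nil =>
    exact ⟨.leaf .fls, by simp [cd], by rw [sem_leaf_fls]; rfl⟩
  | cons c d ih =>
    obtain ⟨tc, htccd, htcsem⟩ := conj_tree c (h c (by simp))
    obtain ⟨td, htdcd, htdsem⟩ := ih (fun c hc => h c (by simp [hc]))
    refine ⟨.orA tc td, by simp only [cd, max_le_iff]; exact ⟨htccd, htdcd⟩, ?_⟩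
    show sem tc ⊔ sem td = _
    rw [htcsem, htdsem]
    rfl

/-- Boolean combinations over a class of definable languages. -/
lemma boolComb_tree {k : ℕ} {C : Language (Val P) → Prop}
    (hC : ∀ L, C L → ∃ t : ADT P, cd t ≤ k ∧ sem t = L)
    {L : Language (Val P)} (hL : BoolComb C L) :
    ∃ t : ADT P, cd t ≤ k + 2 ∧ sem t = L := by
  obtain ⟨d, hd, rfl⟩ := boolComb_dnf hL
  exact dnf_tree d (fun c hc l hl => hC l.2 (hd c hc l hl))

/-- Concatenations over a class of definable languages. -/
lemma concatOf_tree {k : ℕ} {C : Language (Val P) → Prop}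
    (hC : ∀ L, C L → ∃ t : ADT P, cd t ≤ k ∧ sem t = L)
    {L : Language (Val P)} (hL : ConcatOf C L) :
    ∃ t : ADT P, cd t ≤ k ∧ sem t = L := by
  induction hL with
  | base h => exact hC _ h
  | mul _ _ ih₁ ih₂ =>
    obtain ⟨t₁, h₁cd, h₁⟩ := ih₁
    obtain ⟨t₂, h₂cd, h₂⟩ := ih₂
    refine ⟨.sand t₁ t₂, by simp only [cd, max_le_iff]; exact ⟨h₁cd, h₂cd⟩, ?_⟩
    show sem t₁ * sem t₂ = _
    rw [h₁, h₂]

end Trees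

/-- Every language of dot-depth `ℓ` is ADT_{2ℓ+2}-definable. -/
theorem dotdepth_to_ADT {P : Type} [Fintype P] (ℓ : ℕ) (L : Language (Val P))
    (hL : DotDepth ℓ L) :
    ∃ t : ADT P, cd t ≤ 2 * ℓ + 2 ∧ sem t = L := by
  induction ℓ generalizing L with
  | zero =>
    rcases hL with hfin | hcof
    · obtain ⟨t, htcd, hts⟩ := finite_tree hfin
      exact ⟨t, by omega, hts⟩
    · obtain ⟨t, htcd, hts⟩ := finite_tree hcof
      refine ⟨complT t, ?_, ?_⟩
      · rw [cd_complT]; omega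
      · rw [sem_complT, hts, compl_compl]
  | succ ℓ ih =>
    have hC : ∀ M, ConcatOf (DotDepth ℓ) M →
        ∃ t : ADT P, cd t ≤ 2 * ℓ + 2 ∧ sem t = M :=
      fun M hM => concatOf_tree (fun N hN => ih N hN) hM
    obtain ⟨t, htcd, hts⟩ := boolComb_tree hC hL
    exact ⟨t, by omega, hts⟩

end ADTpaper
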